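/- arXiv:math/0205216 — 2 statements merged into one kernel-verified Lean document; each statement's English description precedes it below -/
import Mathlib

section
/- There is no morphism f on finite words over {1,2,3} satisfying all of the following: f(w) = w where w is the Arshon sequence; |f(1)| + |f(2)| + |f(3)| > 3; |f(1)| is minimal among all morphisms g with g(w) = w and |g(1)| + |g(2)| + |g(3)| > 3; and |f(1)|, |f(2)|, |f(3)| are all divisible by 3. -/
open List Filter

/-- Image of a letter in an odd (1-based) position under ψ. -/
def oddBlock : ℕ → List ℕ
  | 1 => [1, 2, 3]
  | 2 => [2, 3, 1]
  | 3 => [3, 1, 2]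
  | _ => []

/-- Image of a letter in an even (1-based) position under ψ. -/
def evenBlock : ℕ → List ℕ
  | 1 => [3, 2, 1]
  | 2 => [1, 3, 2]
  | 3 => [2, 1, 3]
  | _ => []

/-- The Arshon map ψ: replace the letter at each odd (1-based) position by its
`oddBlock`, and the letter at each even position by its `evenBlock`. -/
def psi (l : List ℕ) : List ℕ :=
  ((l.zipIdx.map Prod.swap).map fun p => if p.1 % 2 = 0 then oddBlock p.2 else evenBlock p.2).flatten

/-- The Arshon sequence `w = lim ψ^k(1)` as an infinite word: since
`|ψ^[n+1] [1]| = 3^(n+1) > n`, the `n`-th letter (0-based) is well defined. -/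
def arshon (n : ℕ) : ℕ := (psi^[n + 1] [1]).getD n 0

/-- A word over the alphabet {1,2,3}. -/
def Word123 (l : List ℕ) : Prop := ∀ a ∈ l, a = 1 ∨ a = 2 ∨ a = 3

/-- A morphism on finite words over {1,2,3}. -/
def IsMorphism123 (f : List ℕ → List ℕ) : Prop :=
  (∀ u v, f (u ++ v) = f u ++ f v) ∧ ∀ l, Word123 l → Word123 (f l)

/-- `f(w) = w` where `w` is the infinite Arshon word: the image of every finite
prefix of `w` is again a prefix of `w`, and these images have unbounded length
(so that `f(w)` is genuinely the infinite word `w`). -/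
def FixesArshon (f : List ℕ → List ℕ) : Prop :=
  (∀ n, f ((List.range n).map arshon)
      = (List.range (f ((List.range n).map arshon)).length).map arshon) ∧
  Tendsto (fun n => (f ((List.range n).map arshon)).length) atTop atTop

/-- The infinite word `s` is obtained by iterating the morphism `f` on the
letter 1: `f(1)` begins with 1, `|f^k(1)| → ∞`, and `s = lim f^k(1)`. -/
def IterLimit (f : List ℕ → List ℕ) (s : ℕ → ℕ) : Prop :=
  (∃ t, f [1] = 1 :: t) ∧
  Tendsto (fun k => (f^[k] [1]).length) atTop atTop ∧
  ∀ k n, n < (f^[k] [1]).length → (f^[k] [1]).getD n 0 = s n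

namespace Ars

def nxt : ℕ → ℕ | 1 => 2 | 2 => 3 | 3 => 1 | _ => 1

def W : ℕ → ℕ
  | 0 => 1
  | (k+1) =>
    (if ((k+1)/3) % 2 = 0 then oddBlock (W ((k+1)/3)) else evenBlock (W ((k+1)/3))).getD ((k+1)%3) 0
decreasing_by all_goals exact Nat.div_lt_self (Nat.succ_pos k) (by norm_num)

lemma W0 : W 0 = 1 := by simp [W]

lemma Wsucc (k : ℕ) : W (k+1)
    = (if ((k+1)/3) % 2 = 0 then oddBlock (W ((k+1)/3)) else evenBlock (W ((k+1)/3))).getD ((k+1)%3) 0 := by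
  rw [W]

lemma Wmem (k : ℕ) : W k = 1 ∨ W k = 2 ∨ W k = 3 := by
  induction k using Nat.strong_induction_on with
  | _ k ih =>
    match k with
    | 0 => simp [W0]
    | (k+1) =>
      rw [Wsucc]
      have h3 : (k+1)/3 < k+1 := Nat.div_lt_self (Nat.succ_pos k) (by norm_num)
      have hm := ih _ h3
      have hr : (k+1) % 3 = 0 ∨ (k+1) % 3 = 1 ∨ (k+1) % 3 = 2 := by omega
      rcases Nat.mod_two_eq_zero_or_one ((k+1)/3) with he | he <;>
        rcases hm with h | h | h <;> rw [h] <;> simp [he] <;>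
        rcases hr with h' | h' | h' <;> rw [h'] <;> simp [oddBlock, evenBlock]


lemma nxt_ne {x : ℕ} (hx : x = 1 ∨ x = 2 ∨ x = 3) : nxt x ≠ x := by
  rcases hx with h|h|h <;> subst h <;> simp [nxt]

lemma nxt2_ne {x : ℕ} (hx : x = 1 ∨ x = 2 ∨ x = 3) : nxt (nxt x) ≠ x := by
  rcases hx with h|h|h <;> subst h <;> simp [nxt]

lemma nxt3 {x : ℕ} (hx : x = 1 ∨ x = 2 ∨ x = 3) : nxt (nxt (nxt x)) = x := by
  rcases hx with h|h|h <;> subst h <;> simp [nxt]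

lemma nxt_mem {x : ℕ} (hx : x = 1 ∨ x = 2 ∨ x = 3) : nxt x = 1 ∨ nxt x = 2 ∨ nxt x = 3 := by
  rcases hx with h|h|h <;> subst h <;> simp [nxt]

lemma nxt_inj {x y : ℕ} (hx : x = 1 ∨ x = 2 ∨ x = 3) (hy : y = 1 ∨ y = 2 ∨ y = 3)
    (h : nxt x = nxt y) : x = y := by
  rcases hx with h1|h1|h1 <;> rcases hy with h2|h2|h2 <;> subst h1 <;> subst h2 <;> simp_all [nxt]

lemma W3q1 (q : ℕ) : W (3*q+1) = nxt (W q) := by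
  rw [show 3*q+1 = (3*q)+1 by ring, Wsucc]
  have h1 : (3*q+1)/3 = q := by omega
  have h2 : (3*q+1)%3 = 1 := by omega
  rw [h1, h2]
  rcases Nat.mod_two_eq_zero_or_one q with he | he <;>
    rcases Wmem q with h|h|h <;> rw [h] <;> simp [he, oddBlock, evenBlock, nxt]

lemma W3q0 (q : ℕ) : W (3*q) = if q % 2 = 0 then W q else nxt (nxt (W q)) := by
  match q with
  | 0 => simp [W0]
  | (q+1) =>
    rw [show 3*(q+1) = (3*q+2)+1 by ring, Wsucc]
    have h1 : (3*q+2+1)/3 = q+1 := by omega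
    have h2 : (3*q+2+1)%3 = 0 := by omega
    rw [h1, h2]
    rcases Nat.mod_two_eq_zero_or_one (q+1) with he | he <;>
      rcases Wmem (q+1) with h|h|h <;> rw [h] <;> simp [he, oddBlock, evenBlock, nxt]

lemma W3q2 (q : ℕ) : W (3*q+2) = if q % 2 = 0 then nxt (nxt (W q)) else W q := by
  rw [show 3*q+2 = (3*q+1)+1 by ring, Wsucc]
  have h1 : (3*q+1+1)/3 = q := by omega
  have h2 : (3*q+1+1)%3 = 2 := by omega
  rw [h1, h2]
  rcases Nat.mod_two_eq_zero_or_one q with he | he <;>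
    rcases Wmem q with h|h|h <;> rw [h] <;> simp [he, oddBlock, evenBlock, nxt]

lemma Wne (k : ℕ) : W (k+1) ≠ W k := by
  induction k using Nat.strong_induction_on with
  | _ k ih =>
    have hd : k % 3 = 0 ∨ k % 3 = 1 ∨ k % 3 = 2 := by omega
    set q := k / 3 with hq
    rcases hd with hr | hr | hr
    · have hk : k = 3*q := by omega
      rw [hk, W3q1, W3q0]
      rcases Nat.mod_two_eq_zero_or_one q with he | he <;>
        rcases Wmem q with h|h|h <;> simp [he, h, nxt]
    · have hk : k = 3*q+1 := by omega
      rw [hk, show 3*q+1+1 = 3*q+2 by ring, W3q2, W3q1]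
      rcases Nat.mod_two_eq_zero_or_one q with he | he <;>
        rcases Wmem q with h|h|h <;> simp [he, h, nxt]
    · have hk : k = 3*q+2 := by omega
      have hq' : q < k := by omega
      have ihq : W (q+1) ≠ W q := ih q hq'
      rw [hk, show 3*q+2+1 = 3*(q+1) by ring, W3q2, W3q0]
      rcases Nat.mod_two_eq_zero_or_one q with he | he <;>
        have he' := (by omega : (q+1) % 2 = 1 - q % 2) <;>
        rcases Wmem q with h|h|h <;> rcases Wmem (q+1) with h'|h'|h' <;>
        simp [he, he', h, h', nxt] <;> simp [h, h'] at ihq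

def dd (k : ℕ) : Prop := W (k+1) = nxt (W k)

lemma dd_step {k : ℕ} (h : ¬ dd k) : W (k+1) = nxt (nxt (W k)) := by
  have h1 := Wmem k
  have h2 := Wmem (k+1)
  have h3 := Wne k
  unfold dd at h
  rcases h1 with a|a|a <;> rcases h2 with b|b|b <;> simp [a, b, nxt] at h h3 ⊢ <;> omega

lemma dd3q0 (q : ℕ) : dd (3*q) ↔ q % 2 = 0 := by
  unfold dd
  rw [W3q1, W3q0]
  rcases Nat.mod_two_eq_zero_or_one q with he | he <;>
    rcases Wmem q with h|h|h <;> simp [he, h, nxt]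

lemma dd3q1 (q : ℕ) : dd (3*q+1) ↔ q % 2 = 0 := by
  unfold dd
  rw [show 3*q+1+1 = 3*q+2 by ring, W3q2, W3q1]
  rcases Nat.mod_two_eq_zero_or_one q with he | he <;>
    rcases Wmem q with h|h|h <;> simp [he, h, nxt]

lemma dd3q2 (q : ℕ) : dd (3*q+2) ↔ dd q := by
  unfold dd
  rw [show 3*q+2+1 = 3*(q+1) by ring, W3q2, W3q0]
  rcases Nat.mod_two_eq_zero_or_one q with he | he <;>
    have he' := (by omega : (q+1) % 2 = 1 - q % 2) <;>
    rcases Wmem q with h|h|h <;> rcases Wmem (q+1) with h'|h'|h' <;>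
    simp [he, he', h, h', nxt]

lemma lemCp {x : ℕ} (hx : x % 3 = 1) : ¬ (dd x ↔ x % 2 = 0) := by
  obtain ⟨u, rfl⟩ : ∃ u, x = 3*u+1 := ⟨x/3, by omega⟩
  rw [dd3q1]
  intro h
  rcases Nat.mod_two_eq_zero_or_one u with he | he
  · have := h.mp he; omega
  · have := h.mpr (by omega); omega

lemma lemCm {x : ℕ} (hx : x % 3 = 0) : ¬ (dd x ↔ x % 2 = 1) := by
  obtain ⟨u, rfl⟩ : ∃ u, x = 3*u := ⟨x/3, by omega⟩
  rw [dd3q0]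
  intro h
  rcases Nat.mod_two_eq_zero_or_one u with he | he
  · have := h.mp he; omega
  · have := h.mpr (by omega); omega

theorem SF : ∀ m, 0 < m → ∀ s, ¬ (∀ i, i < m → W (s+i) = W (s+m+i)) := by
  intro m
  induction m using Nat.strong_induction_on with
  | _ m IH =>
    intro hm s H
    have Hd : ∀ j, s ≤ j → j+1 < s+m → (dd j ↔ dd (j+m)) := by
      intro j h1 h2
      have e1 := H (j-s) (by omega)
      have e2 := H (j+1-s) (by omega)
      rw [show s+(j-s) = j by omega, show s+m+(j-s) = j+m by omega] at e1
      rw [show s+(j+1-s) = j+1 by omega, show s+m+(j+1-s) = j+m+1 by omega] at e2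
      unfold dd
      rw [e1, e2]
    have h3 : m % 3 = 0 ∨ m % 3 = 1 ∨ m % 3 = 2 := by omega
    rcases h3 with h3 | h3 | h3
    · -- m divisible by 3 : descend
      have hr1 : 0 < m/3 := by omega
      set r := m/3 with hr
      set k0 := (s+1)/3 with hk0
      refine IH r (by omega) hr1 k0 ?_
      intro i hi
      have e := H (3*(k0+i)+1-s) (by omega)
      rw [show s+(3*(k0+i)+1-s) = 3*(k0+i)+1 by omega,
          show s+m+(3*(k0+i)+1-s) = 3*(k0+i+r)+1 by omega, W3q1, W3q1] at e
      have := nxt_inj (Wmem _) (Wmem _) e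
      rw [show k0+r+i = k0+i+r by ring]
      exact this
    · -- m ≡ 1 mod 3
      by_cases hm1 : m = 1
      · have e := H 0 (by omega)
        rw [hm1] at e
        simp at e
        exact Wne s (by simpa using e.symm)
      · set t := m/3 with hth
        have hmt : m = 3*t+1 := by omega
        have ht1 : 1 ≤ t := by omega
        rcases Nat.mod_two_eq_zero_or_one t with ht | ht
        · -- t even : dd-based interval argument
          set k2 := s/3 with hk2
          have Bc : ∀ i, i < t → (dd (k2+i) ↔ (k2+i) % 2 = 1) := by
            intro i hi
            have hb := Hd (3*(k2+i)+2) (by omega) (by omega)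
            rw [dd3q2, show 3*(k2+i)+2+m = 3*(k2+i+t+1) by omega, dd3q0] at hb
            exact hb.trans (by omega)
          by_cases ht3 : 3 ≤ t
          · obtain ⟨i, hi, hx⟩ : ∃ i, i < t ∧ (k2+i) % 3 = 0 :=
              ⟨(3 - k2 % 3) % 3, by omega, by omega⟩
            exact lemCm hx (Bc i hi)
          · have ht2 : t = 2 := by omega
            set k0 := (s+1)/3 with hk0
            have Cc : ∀ i, i < 2 → (dd (k0+2+i) ↔ (k0+2+i) % 2 = 0) := by
              intro i hi
              have hc := Hd (3*(k0+i)+1) (by omega) (by omega)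
              rw [dd3q1, show 3*(k0+i)+1+m = 3*(k0+i+2)+2 by omega, dd3q2] at hc
              rw [show k0+2+i = k0+i+2 by ring]
              exact hc.symm.trans (by omega)
            have hk23 : k2 % 3 = 0 ∨ k2 % 3 = 1 ∨ k2 % 3 = 2 := by omega
            rcases hk23 with hk | hk | hk
            · exact lemCm (by omega) (Bc 0 (by omega))
            · -- k2 ≡ 1 : use Cc
              have hk0r : k0 % 3 = 1 ∨ k0 % 3 = 2 := by omega
              rcases hk0r with hk' | hk'
              · exact lemCp (by omega) (Cc 1 (by omega))
              · exact lemCp (by omega) (Cc 0 (by omega))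
            · exact lemCm (by omega) (Bc 1 (by omega))
        · -- t odd : letter pair argument
          set q0 := (s+2)/3 with hq0
          have e0 := H (3*q0-s) (by omega)
          have e1 := H (3*q0+1-s) (by omega)
          rw [show s+(3*q0-s) = 3*q0 by omega,
              show s+m+(3*q0-s) = 3*(q0+t)+1 by omega, W3q0, W3q1] at e0
          rw [show s+(3*q0+1-s) = 3*q0+1 by omega,
              show s+m+(3*q0+1-s) = 3*(q0+t)+2 by omega, W3q1, W3q2] at e1
          rcases Nat.mod_two_eq_zero_or_one q0 with hp | hp
          · rw [if_pos hp] at e0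
            rw [if_neg (by omega : ¬ (q0+t) % 2 = 0)] at e1
            rcases Wmem q0 with a|a|a <;> rcases Wmem (q0+t) with b|b|b <;>
              rw [a, b] at e0 e1 <;> simp [nxt] at e0 e1
          · rw [if_neg (by omega)] at e0
            rw [if_pos (by omega : (q0+t) % 2 = 0)] at e1
            rcases Wmem q0 with a|a|a <;> rcases Wmem (q0+t) with b|b|b <;>
              rw [a, b] at e0 e1 <;> simp [nxt] at e0 e1
    · -- m ≡ 2 mod 3
      set t := m/3 with hth
      have hmt : m = 3*t+2 := by omega
      rcases Nat.mod_two_eq_zero_or_one t with ht | ht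
      · -- t even : pair or single
        set q1 := (s+1)/3 with hq1
        by_cases hb : 3*q1+2 < s+m
        · have e1 := H (3*q1+1-s) (by omega)
          have e2 := H (3*q1+2-s) (by omega)
          rw [show s+(3*q1+1-s) = 3*q1+1 by omega,
              show s+m+(3*q1+1-s) = 3*(q1+t+1) by omega, W3q1, W3q0] at e1
          rw [show s+(3*q1+2-s) = 3*q1+2 by omega,
              show s+m+(3*q1+2-s) = 3*(q1+t+1)+1 by omega, W3q2, W3q1] at e2
          rcases Nat.mod_two_eq_zero_or_one q1 with hp | hp
          · rw [if_neg (by omega : ¬ (q1+t+1) % 2 = 0)] at e1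
            rw [if_pos hp] at e2
            rcases Wmem q1 with a|a|a <;> rcases Wmem (q1+t+1) with b|b|b <;>
              rw [a, b] at e1 e2 <;> simp [nxt] at e1 e2
          · rw [if_pos (by omega : (q1+t+1) % 2 = 0)] at e1
            rw [if_neg (by omega)] at e2
            rcases Wmem q1 with a|a|a <;> rcases Wmem (q1+t+1) with b|b|b <;>
              rw [a, b] at e1 e2 <;> simp [nxt] at e1 e2
        · -- t = 0 and s % 3 ≠ 1 : single aligned triple
          have hts : t = 0 ∧ s % 3 ≠ 1 := by omega
          set q0 := (s+2)/3 with hq0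
          have e := H (3*q0-s) (by omega)
          rw [show s+(3*q0-s) = 3*q0 by omega,
              show s+m+(3*q0-s) = 3*q0+2 by omega, W3q0, W3q2] at e
          rcases Nat.mod_two_eq_zero_or_one q0 with hp | hp <;>
            simp [hp] at e <;>
            rcases Wmem q0 with a|a|a <;> rw [a] at e <;> simp [nxt] at e
      · -- t odd : descend to period t
        set q0 := (s+2)/3 with hq0
        refine IH t (by omega) (by omega) q0 ?_
        intro i hi
        have e := H (3*(q0+i)-s) (by omega)
        rw [show s+(3*(q0+i)-s) = 3*(q0+i) by omega,
            show s+m+(3*(q0+i)-s) = 3*(q0+i+t)+2 by omega, W3q0, W3q2] at e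
        rw [show q0+t+i = q0+i+t by ring]
        rcases Nat.mod_two_eq_zero_or_one (q0+i) with hp | hp
        · rw [if_pos hp, if_neg (by omega : ¬ (q0+i+t) % 2 = 0)] at e
          exact e
        · rw [if_neg (by omega), if_pos (by omega : (q0+i+t) % 2 = 0)] at e
          rcases Wmem (q0+i) with a|a|a <;> rcases Wmem (q0+i+t) with b|b|b <;>
            simp [a, b, nxt] at e ⊢

lemma psi_append_single (u : List ℕ) (x : ℕ) :
    psi (u ++ [x]) = psi u ++ (if u.length % 2 = 0 then oddBlock x else evenBlock x) := by
  unfold psi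
  rw [List.zipIdx_append, List.map_append, List.map_append, List.flatten_append]
  simp

lemma psi_range_W (N : ℕ) : psi ((List.range N).map W) = (List.range (3*N)).map W := by
  induction N with
  | zero => simp [psi]
  | succ N ih =>
    rw [List.range_succ, List.map_append, List.map_singleton, psi_append_single, ih]
    have hlen : ((List.range N).map W).length = N := by simp
    rw [hlen]
    have : List.range (3*(N+1)) = List.range (3*N) ++ [3*N, 3*N+1, 3*N+2] := by
      rw [show 3*(N+1) = 3*N + 3 by ring, List.range_add]
      simp [List.range_succ]
    rw [this, List.map_append]
    congr 1
    have h0 := W3q0 N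
    have h1 := W3q1 N
    have h2 := W3q2 N
    rcases Nat.mod_two_eq_zero_or_one N with he | he <;>
      rcases Wmem N with a|a|a <;>
      simp [he, a, nxt] at h0 h1 h2 <;>
      simp [he, a, oddBlock, evenBlock, h0, h1, h2]

lemma psi_iter (m : ℕ) : psi^[m] [1] = (List.range (3^m)).map W := by
  induction m with
  | zero => rw [pow_zero, show List.range 1 = [0] from rfl, List.map_singleton, W0]; rfl
  | succ m ih =>
    rw [Function.iterate_succ_apply', ih, psi_range_W, pow_succ]
    ring_nf

lemma arshon_eq_W : arshon = W := by
  funext n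
  unfold arshon
  rw [psi_iter]
  have hn : n < 3^(n+1) := by
    calc n < 2^n := Nat.lt_two_pow_self
    _ ≤ 3^n := Nat.pow_le_pow_left (by norm_num) n
    _ ≤ 3^(n+1) := Nat.pow_le_pow_right (by norm_num) (by omega)
  rw [List.getD_eq_getElem?_getD]
  simp [hn]

lemma W1 : W 1 = 2 := by rw [show (1:ℕ) = 3*0+1 from rfl, W3q1, W0]; rfl
lemma W2 : W 2 = 3 := by rw [show (2:ℕ) = 3*0+2 from rfl, W3q2]; norm_num [W0, nxt]
lemma W3 : W 3 = 1 := by rw [show (3:ℕ) = 3*1 from rfl, W3q0]; norm_num [W1, nxt]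
lemma W4 : W 4 = 3 := by rw [show (4:ℕ) = 3*1+1 from rfl, W3q1]; norm_num [W1, nxt]
lemma W5 : W 5 = 2 := by rw [show (5:ℕ) = 3*1+2 from rfl, W3q2]; norm_num [W1, nxt]
lemma W9 : W 9 = 3 := by rw [show (9:ℕ) = 3*3 from rfl, W3q0]; norm_num [W3, nxt]
lemma W11 : W 11 = 1 := by rw [show (11:ℕ) = 3*3+2 from rfl, W3q2]; norm_num [W3, nxt]
lemma W12 : W 12 = 3 := by rw [show (12:ℕ) = 3*4 from rfl, W3q0]; norm_num [W4, nxt]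
lemma W13 : W 13 = 1 := by rw [show (13:ℕ) = 3*4+1 from rfl, W3q1]; norm_num [W4, nxt]
lemma W14 : W 14 = 2 := by rw [show (14:ℕ) = 3*4+2 from rfl, W3q2]; norm_num [W4, nxt]
lemma W15 : W 15 = 1 := by rw [show (15:ℕ) = 3*5 from rfl, W3q0]; norm_num [W5, nxt]

def pref (n : ℕ) : List ℕ := (List.range n).map W

def seg (a c : ℕ) : List ℕ := (List.range c).map (fun i => W (a+i))

@[simp] lemma pref_len (n : ℕ) : (pref n).length = n := by simp [pref]

@[simp] lemma seg_len (a c : ℕ) : (seg a c).length = c := by simp [seg]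

lemma pref_add_seg (a c : ℕ) : pref (a+c) = pref a ++ seg a c := by
  unfold pref seg
  rw [List.range_add, List.map_append, List.map_map]
  rfl

lemma seg_get (a c i : ℕ) (hi : i < c) : (seg a c).getD i 0 = W (a+i) := by
  unfold seg
  rw [List.getD_eq_getElem?_getD, List.getElem?_map, List.getElem?_range hi]
  rfl

lemma seg_ext {a b c : ℕ} (h : seg a c = seg b c) : ∀ i, i < c → W (a+i) = W (b+i) := by
  intro i hi
  have h2 := congrArg (fun l => l.getD i 0) h
  rwa [seg_get _ _ _ hi, seg_get _ _ _ hi] at h2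

lemma pref_succ (n : ℕ) : pref (n+1) = pref n ++ [W n] := by
  simp [pref, List.range_succ]

section Morph

variable {f : List ℕ → List ℕ}

lemma extract (hadd : ∀ u v, f (u++v) = f u ++ f v)
    (hfix : ∀ n, f (pref n) = pref ((f (pref n)).length)) (n : ℕ) :
    f [W n] = seg ((f (pref n)).length) (f [W n]).length := by
  have h2 : f (pref (n+1)) = f (pref n) ++ f [W n] := by rw [pref_succ, hadd]
  have h3 := hfix (n+1)
  rw [h2] at h3
  simp only [List.length_append] at h3
  rw [hfix n] at h3
  simp only [pref_len] at h3
  rw [pref_add_seg] at h3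
  exact List.append_cancel_left h3

lemma Lrec (hadd : ∀ u v, f (u++v) = f u ++ f v) (n : ℕ) :
    (f (pref (n+1))).length = (f (pref n)).length + (f [W n]).length := by
  rw [pref_succ, hadd]
  simp

end Morph

lemma nxt_mem_any (y : ℕ) : nxt y = 1 ∨ nxt y = 2 ∨ nxt y = 3 := by
  rcases y with _|_|_|_|y <;> simp [nxt]

def decode3 (u : List ℕ) : List ℕ :=
  (List.range (u.length / 3)).map (fun k => nxt (nxt (u.getD (3*k+1) 0)))

lemma mem_decode3 {x : ℕ} {u : List ℕ} (h : x ∈ decode3 u) : x = 1 ∨ x = 2 ∨ x = 3 := by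
  unfold decode3 at h
  rw [List.mem_map] at h
  obtain ⟨k, -, rfl⟩ := h
  exact nxt_mem_any _

@[simp] lemma decode3_len (u : List ℕ) : (decode3 u).length = u.length / 3 := by
  simp [decode3]

lemma decode3_seg {a c : ℕ} (ha : 3 ∣ a) (hc : 3 ∣ c) : decode3 (seg a c) = seg (a/3) (c/3) := by
  unfold decode3
  rw [seg_len]
  show _ = (List.range (c/3)).map fun i => W (a/3+i)
  refine List.map_congr_left ?_
  intro k hk
  rw [List.mem_range] at hk
  rw [seg_get a c (3*k+1) (by omega)]
  rw [show a + (3*k+1) = 3*(a/3 + k) + 1 by omega, W3q1, nxt3 (Wmem _)]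

def dec (f : List ℕ → List ℕ) : ℕ → List ℕ := fun a =>
  if a = 1 then decode3 (f [1]) else if a = 2 then decode3 (f [2])
  else if a = 3 then decode3 (f [3]) else []

def gmor (f : List ℕ → List ℕ) (l : List ℕ) : List ℕ := l.flatMap (dec f)
lemma f_nil {f : List ℕ → List ℕ} (hadd : ∀ u v, f (u++v) = f u ++ f v) : f [] = [] := by
  have h := hadd [] []
  simp only [List.nil_append] at h
  have h2 := congrArg List.length h
  simp only [List.length_append] at h2
  have : (f []).length = 0 := by omega
  exact List.length_eq_zero_iff.mp this

end Ars

/-- There is no morphism `f` with `f(w) = w`, `|f(1)|+|f(2)|+|f(3)| > 3`,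
`|f(1)|` minimal among all such morphisms, and `|f(1)|, |f(2)|, |f(3)|` all
divisible by 3. -/
theorem arshon_no_minimal_morphism_all_lengths_div_three :
    ¬ ∃ f : List ℕ → List ℕ, IsMorphism123 f ∧ FixesArshon f ∧
      (f [1]).length + (f [2]).length + (f [3]).length > 3 ∧
      (∀ g : List ℕ → List ℕ, IsMorphism123 g → FixesArshon g →
        (g [1]).length + (g [2]).length + (g [3]).length > 3 →
        (f [1]).length ≤ (g [1]).length) ∧
      3 ∣ (f [1]).length ∧ 3 ∣ (f [2]).length ∧ 3 ∣ (f [3]).length := by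
  classical
  rintro ⟨f, ⟨hadd, hword⟩, ⟨hfix0, htend0⟩, hgt, hmin, hd1, hd2, hd3⟩
  rw [Ars.arshon_eq_W] at hfix0 htend0
  have hfix : ∀ n, f (Ars.pref n) = Ars.pref ((f (Ars.pref n)).length) := by
    intro n
    have h := hfix0 n
    exact h
  have E : ∀ n, f [Ars.W n] = Ars.seg ((f (Ars.pref n)).length) (f [Ars.W n]).length :=
    Ars.extract hadd hfix
  have Lr : ∀ n, (f (Ars.pref (n+1))).length = (f (Ars.pref n)).length + (f [Ars.W n]).length :=
    Ars.Lrec hadd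
  have L0 : (f (Ars.pref 0)).length = 0 := by
    have h0 : Ars.pref 0 = [] := rfl
    rw [h0, Ars.f_nil hadd]
    rfl
  -- letter image lengths along the word
  have cw : ∀ n, (f [Ars.W n]).length
      = if Ars.W n = 1 then (f [1]).length else if Ars.W n = 2 then (f [2]).length
        else (f [3]).length := by
    intro n
    rcases Ars.Wmem n with h|h|h <;> rw [h] <;> norm_num
  have c0 : (f [Ars.W 0]).length = (f [1]).length := by rw [cw 0, Ars.W0]; norm_num
  have c1 : (f [Ars.W 1]).length = (f [2]).length := by rw [cw 1, Ars.W1]; norm_num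
  have c2 : (f [Ars.W 2]).length = (f [3]).length := by rw [cw 2, Ars.W2]; norm_num
  have c3 : (f [Ars.W 3]).length = (f [1]).length := by rw [cw 3, Ars.W3]; norm_num
  have c4 : (f [Ars.W 4]).length = (f [3]).length := by rw [cw 4, Ars.W4]; norm_num
  have c11 : (f [Ars.W 11]).length = (f [1]).length := by rw [cw 11, Ars.W11]; norm_num
  have c12 : (f [Ars.W 12]).length = (f [3]).length := by rw [cw 12, Ars.W12]; norm_num
  have c13 : (f [Ars.W 13]).length = (f [1]).length := by rw [cw 13, Ars.W13]; norm_num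
  have c14 : (f [Ars.W 14]).length = (f [2]).length := by rw [cw 14, Ars.W14]; norm_num
  have L1 : (f (Ars.pref 1)).length = (f (Ars.pref 0)).length + (f [1]).length := by
    have h := Lr 0; rw [c0] at h; exact h
  have L2 : (f (Ars.pref 2)).length = (f (Ars.pref 1)).length + (f [2]).length := by
    have h := Lr 1; rw [c1] at h; exact h
  have L3 : (f (Ars.pref 3)).length = (f (Ars.pref 2)).length + (f [3]).length := by
    have h := Lr 2; rw [c2] at h; exact h
  have L4 : (f (Ars.pref 4)).length = (f (Ars.pref 3)).length + (f [1]).length := by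
    have h := Lr 3; rw [c3] at h; exact h
  have L5 : (f (Ars.pref 5)).length = (f (Ars.pref 4)).length + (f [3]).length := by
    have h := Lr 4; rw [c4] at h; exact h
  have L12 : (f (Ars.pref 12)).length = (f (Ars.pref 11)).length + (f [1]).length := by
    have h := Lr 11; rw [c11] at h; exact h
  have L13 : (f (Ars.pref 13)).length = (f (Ars.pref 12)).length + (f [3]).length := by
    have h := Lr 12; rw [c12] at h; exact h
  have L14 : (f (Ars.pref 14)).length = (f (Ars.pref 13)).length + (f [1]).length := by
    have h := Lr 13; rw [c13] at h; exact h
  have L15 : (f (Ars.pref 15)).length = (f (Ars.pref 14)).length + (f [2]).length := by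
    have h := Lr 14; rw [c14] at h; exact h
  -- square helper
  have SQ : ∀ (x y c : ℕ), 0 < c → f [x] = Ars.seg y c → f [x] = Ars.seg (y+c) c → False := by
    intro x y c hc h1 h2
    have h := h1.symm.trans h2
    exact Ars.SF c hc y (Ars.seg_ext h)
  by_cases h1z : (f [1]).length = 0
  · by_cases h3z : (f [3]).length = 0
    · -- only letter 2 visible : square at (0, n2)
      refine SQ 2 0 (f [2]).length (by omega) ?_ ?_
      · have h := E 1
        rw [Ars.W1] at h
        rwa [show (f (Ars.pref 1)).length = 0 by omega] at h
      · have h := E 5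
        rw [Ars.W5] at h
        rwa [show (f (Ars.pref 5)).length = 0 + (f [2]).length by omega] at h
    · -- n1 = 0, n3 > 0 : square at (L2, n3)
      refine SQ 3 ((f (Ars.pref 2)).length) (f [3]).length (by omega) ?_ ?_
      · have h := E 2
        rw [Ars.W2] at h
        exact h
      · have h := E 4
        rw [Ars.W4] at h
        rwa [show (f (Ars.pref 4)).length = (f (Ars.pref 2)).length + (f [3]).length by omega] at h
  · by_cases h2z : (f [2]).length = 0
    · -- n2 = 0 : square at (L13, n1) from 1,2,1 at positions 13,14,15
      refine SQ 1 ((f (Ars.pref 13)).length) (f [1]).length (by omega) ?_ ?_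
      · have h := E 13
        rw [Ars.W13] at h
        exact h
      · have h := E 15
        rw [Ars.W15] at h
        rwa [show (f (Ars.pref 15)).length = (f (Ars.pref 13)).length + (f [1]).length by omega] at h
    · by_cases h3z : (f [3]).length = 0
      · -- n3 = 0 : square at (L11, n1) from 1,3,1 at positions 11,12,13
        refine SQ 1 ((f (Ars.pref 11)).length) (f [1]).length (by omega) ?_ ?_
        · have h := E 11
          rw [Ars.W11] at h
          exact h
        · have h := E 13
          rw [Ars.W13] at h
          rwa [show (f (Ars.pref 13)).length = (f (Ars.pref 11)).length + (f [1]).length by omega] at h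
      · -- all letters have positive image length
        by_cases hsum : (f [1]).length + (f [2]).length + (f [3]).length ≤ 9
        · -- all lengths are 3 : W 0 = W 9 contradiction
          have e0 := E 0
          have e3 := E 3
          rw [Ars.W0] at e0
          rw [Ars.W3] at e3
          rw [L0] at e0
          rw [show (f (Ars.pref 3)).length = 9 by omega] at e3
          have h := Ars.seg_ext (e0.symm.trans e3) 0 (by omega)
          simp only [Nat.add_zero, Nat.zero_add] at h
          rw [Ars.W0, Ars.W9] at h
          exact absurd h (by norm_num)
        · -- descent
          have hdiv : ∀ n, 3 ∣ (f (Ars.pref n)).length := by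
            intro n
            induction n with
            | zero => rw [L0]; omega
            | succ n ih =>
              rw [Lr n, cw n]
              rcases Ars.Wmem n with h|h|h <;> rw [h] <;> norm_num <;>
                exact Nat.dvd_add ih (by assumption)
          have gadd : ∀ u v, Ars.gmor f (u++v) = Ars.gmor f u ++ Ars.gmor f v := by
            intro u v
            simp [Ars.gmor]
          have gsingle : ∀ a, Ars.gmor f [a] = Ars.dec f a := by
            intro a
            simp [Ars.gmor]
          have gword : ∀ l, Word123 l → Word123 (Ars.gmor f l) := by
            intro l _ x hx
            rw [Ars.gmor, List.mem_flatMap] at hx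
            obtain ⟨a, -, hx⟩ := hx
            unfold Ars.dec at hx
            split at hx
            · exact Ars.mem_decode3 hx
            · split at hx
              · exact Ars.mem_decode3 hx
              · split at hx
                · exact Ars.mem_decode3 hx
                · simp at hx
          have hc3 : ∀ n, 3 ∣ (f [Ars.W n]).length := by
            intro n
            rw [cw n]
            rcases Ars.Wmem n with h|h|h <;> rw [h] <;> norm_num <;> assumption
          have gp : ∀ n, Ars.gmor f (Ars.pref n) = Ars.pref ((f (Ars.pref n)).length / 3) := by
            intro n
            induction n with
            | zero =>
              rw [L0]
              show Ars.gmor f [] = Ars.pref 0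
              simp [Ars.gmor]
              rfl
            | succ n ih =>
              conv_lhs => rw [Ars.pref_succ, gadd, ih, gsingle]
              have hdec : Ars.dec f (Ars.W n) = Ars.decode3 (f [Ars.W n]) := by
                rcases Ars.Wmem n with h|h|h <;> rw [h] <;> simp [Ars.dec]
              rw [hdec, E n, Ars.decode3_seg (hdiv n) (hc3 n), ← Ars.pref_add_seg]
              congr 1
              have h1 := Lr n
              have h2 := hdiv n
              have h3 := hc3 n
              have h4 := hdiv (n+1)
              omega
          have glen : ∀ n, (Ars.gmor f (Ars.pref n)).length = (f (Ars.pref n)).length / 3 := by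
            intro n
            rw [gp n, Ars.pref_len]
          have gfix : FixesArshon (Ars.gmor f) := by
            constructor
            · intro n
              rw [Ars.arshon_eq_W]
              show Ars.gmor f (Ars.pref n) = (List.range (Ars.gmor f (Ars.pref n)).length).map Ars.W
              rw [glen n, gp n]
              rfl
            · rw [Ars.arshon_eq_W]
              have heq : (fun n => (Ars.gmor f ((List.range n).map Ars.W)).length)
                  = fun n => (f (Ars.pref n)).length / 3 := funext glen
              rw [heq]
              have htendP := tendsto_atTop_atTop.mp htend0
              rw [tendsto_atTop_atTop]
              intro b
              obtain ⟨i, hi⟩ := htendP (3*b)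
              refine ⟨i, fun a ha => ?_⟩
              have h2 : 3*b ≤ (f (Ars.pref a)).length := hi a ha
              omega
          have hlen1 : (Ars.gmor f [1]).length = (f [1]).length / 3 := by
            rw [gsingle]
            simp [Ars.dec]
          have hlen2 : (Ars.gmor f [2]).length = (f [2]).length / 3 := by
            rw [gsingle]
            simp [Ars.dec]
          have hlen3 : (Ars.gmor f [3]).length = (f [3]).length / 3 := by
            rw [gsingle]
            simp [Ars.dec]
          have hgt' : (Ars.gmor f [1]).length + (Ars.gmor f [2]).length + (Ars.gmor f [3]).length > 3 := by
            rw [hlen1, hlen2, hlen3]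
            omega
          have hle := hmin (Ars.gmor f) ⟨gadd, gword⟩ gfix hgt'
          rw [hlen1] at hle
          omega
end

section
/- There is no morphism f on finite words over {1,2,3} with f(w) = w (w the Arshon sequence), |f(1)| + |f(2)| + |f(3)| > 3, and |f(1)| = 2. -/
open List Filter

/-! ### Auxiliary development -/

/-- `psi` with a starting position offset. -/
def psiFrom (k : ℕ) (l : List ℕ) : List ℕ :=
  (((l.zipIdx k).map Prod.swap).map fun p => if p.1 % 2 = 0 then oddBlock p.2 else evenBlock p.2).flatten

lemma psi_eq_psiFrom (l : List ℕ) : psi l = psiFrom 0 l := rfl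

lemma psiFrom_cons (k : ℕ) (x : ℕ) (l : List ℕ) :
    psiFrom k (x :: l) =
      (if k % 2 = 0 then oddBlock x else evenBlock x) ++ psiFrom (k + 1) l := by
  simp [psiFrom, List.zipIdx_cons, apply_ite]

lemma oddBlock_length {x : ℕ} (h : x = 1 ∨ x = 2 ∨ x = 3) : (oddBlock x).length = 3 := by
  rcases h with rfl | rfl | rfl <;> rfl

lemma evenBlock_length {x : ℕ} (h : x = 1 ∨ x = 2 ∨ x = 3) : (evenBlock x).length = 3 := by
  rcases h with rfl | rfl | rfl <;> rfl

lemma block_length {x : ℕ} (h : x = 1 ∨ x = 2 ∨ x = 3) (k : ℕ) :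
    (if k % 2 = 0 then oddBlock x else evenBlock x).length = 3 := by
  split <;> [exact oddBlock_length h; exact evenBlock_length h]

lemma psiFrom_length (l : List ℕ) : ∀ k, Word123 l → (psiFrom k l).length = 3 * l.length := by
  induction l with
  | nil => intro k _; rfl
  | cons a t ih =>
    intro k hw
    rw [psiFrom_cons, List.length_append, ih (k + 1) (fun x hx => hw x (by simp [hx])),
      block_length (hw a (by simp)) k]
    simp; ring

lemma psiFrom_getD (l : List ℕ) : ∀ k n r, Word123 l → n < l.length → r < 3 →
    (psiFrom k l).getD (3 * n + r) 0 =
      ((if (k + n) % 2 = 0 then oddBlock else evenBlock) (l.getD n 0)).getD r 0 := by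
  induction l with
  | nil => intro k n r _ hn _; simp at hn
  | cons a t ih =>
    intro k n r hw hn hr
    rw [psiFrom_cons]
    match n with
    | 0 =>
      have hb := block_length (hw a (by simp)) k
      rw [List.getD_append _ _ _ _ (by omega)]
      have h0 : 3 * 0 + r = r := by omega
      rw [h0]
      simp only [Nat.add_zero, List.getD_cons_zero]
      split <;> rfl
    | Nat.succ m =>
      have hb := block_length (hw a (by simp)) k
      rw [List.getD_append_right _ _ _ _ (by omega)]
      have h1 : 3 * (m + 1) + r - (if k % 2 = 0 then oddBlock a else evenBlock a).length
          = 3 * m + r := by omega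
      rw [h1, ih (k + 1) m r (fun x hx => hw x (by simp [hx])) (by simpa using hn) hr]
      have h2 : (k + 1 + m) % 2 = (k + (m + 1)) % 2 := by omega
      rw [h2]
      simp [List.getD_cons_succ]

lemma word123_psi (l : List ℕ) : Word123 (psi l) := by
  intro a ha
  rw [psi, List.mem_flatten] at ha
  obtain ⟨w, hw, haw⟩ := ha
  rw [List.mem_map] at hw
  obtain ⟨⟨i, x⟩, _, rfl⟩ := hw
  dsimp at haw
  split at haw <;>
    (rcases x with _ | _ | _ | _ | x <;> simp [oddBlock, evenBlock] at haw <;> omega)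

lemma word123_iter (k : ℕ) : Word123 (psi^[k] [1]) := by
  cases k with
  | zero => intro a ha; simp at ha; omega
  | succ m => rw [Function.iterate_succ_apply']; exact word123_psi _

lemma length_iter (k : ℕ) : (psi^[k] [1]).length = 3 ^ k := by
  induction k with
  | zero => rfl
  | succ m ih =>
    rw [Function.iterate_succ_apply', psi_eq_psiFrom, psiFrom_length _ 0 (word123_iter m), ih,
      pow_succ]
    ring

lemma psiFrom_append (u : List ℕ) : ∀ k v, psiFrom k (u ++ v) = psiFrom k u ++ psiFrom (k + u.length) v := by
  induction u with
  | nil => intro k v; simp [psiFrom]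
  | cons a t ih =>
    intro k v
    rw [List.cons_append, psiFrom_cons, psiFrom_cons, ih (k + 1) v, List.append_assoc,
      List.length_cons]
    have h : k + (t.length + 1) = k + 1 + t.length := by omega
    rw [h]

lemma psi_prefix {u v : List ℕ} (h : u <+: v) : psi u <+: psi v := by
  obtain ⟨t, rfl⟩ := h
  rw [psi_eq_psiFrom, psi_eq_psiFrom, psiFrom_append]
  exact ⟨_, rfl⟩

lemma iter_prefix_succ (m : ℕ) : psi^[m] [1] <+: psi^[m + 1] [1] := by
  induction m with
  | zero => exact ⟨[2, 3], rfl⟩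
  | succ n ih =>
    rw [Function.iterate_succ_apply', Function.iterate_succ_apply']
    exact psi_prefix ih

lemma iter_prefix {j k : ℕ} (h : j ≤ k) : psi^[j] [1] <+: psi^[k] [1] := by
  induction k with
  | zero => rw [Nat.le_zero.mp h]
  | succ m ih =>
    rcases Nat.lt_or_ge j (m + 1) with hj | hj
    · exact (ih (by omega)).trans (iter_prefix_succ m)
    · have : j = m + 1 := by omega
      rw [this]

lemma lt_three_pow (n : ℕ) : n < 3 ^ (n + 1) :=
  lt_of_lt_of_le (Nat.lt_pow_self (n := n) (by norm_num : 1 < 3))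
    (Nat.pow_le_pow_right (by norm_num) (by omega))

lemma getD_of_prefix {u v : List ℕ} (h : u <+: v) {n : ℕ} (hn : n < u.length) :
    v.getD n 0 = u.getD n 0 := by
  obtain ⟨t, rfl⟩ := h
  exact List.getD_append _ _ _ _ hn

lemma arshon_eq (k n : ℕ) (h : n < 3 ^ k) : arshon n = (psi^[k] [1]).getD n 0 := by
  rw [arshon]
  rcases Nat.le_total k (n + 1) with hk | hk
  · exact getD_of_prefix (iter_prefix hk) (by rw [length_iter]; exact h)
  · refine (getD_of_prefix (iter_prefix hk) ?_).symm
    rw [length_iter]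
    exact lt_three_pow n

lemma arshon_mem (n : ℕ) : arshon n = 1 ∨ arshon n = 2 ∨ arshon n = 3 := by
  have h := word123_iter (n + 1)
  have hn : n < (psi^[n+1] [1]).length := by
    rw [length_iter]; exact lt_three_pow n
  rw [arshon, List.getD_eq_getElem _ _ hn]
  exact h _ (List.getElem_mem hn)

lemma arshon_block (n r : ℕ) (hr : r < 3) :
    arshon (3 * n + r) =
      ((if n % 2 = 0 then oddBlock else evenBlock) (arshon n)).getD r 0 := by
  have hn : n < 3 ^ (n + 1) := lt_three_pow n
  have h3 : 3 * n + r < 3 ^ (n + 2) := by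
    have : 3 ^ (n + 2) = 3 * 3 ^ (n + 1) := by ring
    omega
  rw [arshon_eq (n + 2) _ h3, Function.iterate_succ_apply', psi_eq_psiFrom,
    psiFrom_getD _ 0 n r (word123_iter (n + 1)) (by rw [length_iter]; exact hn) hr,
    Nat.zero_add, ← arshon_eq (n + 1) n hn]

/-- Structural lemma: the factor `12` never occurs in the Arshon word at a
position congruent to 3 or 4 mod 6. -/
lemma no12 (p : ℕ) (h12 : arshon p = 1 ∧ arshon (p + 1) = 2) :
    p % 6 ≠ 3 ∧ p % 6 ≠ 4 := by
  obtain ⟨h1, h2⟩ := h12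
  constructor
  · intro h
    obtain ⟨m, rfl⟩ : ∃ m, p = 3 * (2 * m + 1) := ⟨p / 6, by omega⟩
    have e0 := arshon_block (2 * m + 1) 0 (by norm_num)
    have e1 := arshon_block (2 * m + 1) 1 (by norm_num)
    rw [show 3 * (2 * m + 1) + 0 = 3 * (2 * m + 1) from rfl] at e0
    rw [e0] at h1
    rw [show 3 * (2 * m + 1) + 1 = 3 * (2 * m + 1) + 1 from rfl, e1] at h2
    have hm : (2 * m + 1) % 2 ≠ 0 := by omega
    rcases arshon_mem (2 * m + 1) with h | h | h <;>
      simp [h, hm, evenBlock] at h1 h2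
  · intro h
    obtain ⟨m, hp⟩ : ∃ m, p = 3 * (2 * m + 1) + 1 := ⟨p / 6, by omega⟩
    subst hp
    have e1 := arshon_block (2 * m + 1) 1 (by norm_num)
    have e2 := arshon_block (2 * m + 1) 2 (by norm_num)
    rw [e1] at h1
    rw [show 3 * (2 * m + 1) + 1 + 1 = 3 * (2 * m + 1) + 2 from by ring, e2] at h2
    have hm : (2 * m + 1) % 2 ≠ 0 := by omega
    rcases arshon_mem (2 * m + 1) with h | h | h <;>
      simp [h, hm, evenBlock] at h1 h2

lemma getD_map_range (g : ℕ → ℕ) {i m : ℕ} (h : i < m) :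
    ((List.range m).map g).getD i 0 = g i := by
  rw [List.getD_eq_getElem _ _ (by simpa using h)]
  simp

set_option maxHeartbeats 8000000 in
/-- There is no morphism `f` with `f(w) = w`, `|f(1)|+|f(2)|+|f(3)| > 3`
and `|f(1)| = 2`. -/
theorem arshon_no_fixing_morphism_length_eq_2 :
    ¬ ∃ f : List ℕ → List ℕ, IsMorphism123 f ∧ FixesArshon f ∧
      (f [1]).length + (f [2]).length + (f [3]).length > 3 ∧
      (f [1]).length = 2 := by
  rintro ⟨f, ⟨fapp, -⟩, ⟨hfix, -⟩, -, hlen⟩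
  have hnil : f [] = [] := by
    have h := fapp [] []
    rw [List.nil_append] at h
    have h2 := congrArg List.length h
    rw [List.length_append] at h2
    exact List.eq_nil_of_length_eq_zero (by omega)
  have hcons : ∀ (a : ℕ) (l : List ℕ), f (a :: l) = f [a] ++ f l := by
    intro a l
    simpa using fapp [a] l
  have flen : ∀ l : List ℕ, (f l).length = (l.map fun a => (f [a]).length).sum := by
    intro l
    induction l with
    | nil => simp [hnil]
    | cons a t ih => rw [hcons]; simp [ih]
  have hval : ∀ i, i < 27 → arshon i =
      ([1,2,3,1,3,2,3,1,2,3,2,1,3,1,2,1,3,2,3,1,2,3,2,1,2,3,1] : List ℕ).getD i 0 := by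
    intro i hi
    rw [arshon_eq 3 i (by omega)]
    have h3 : psi^[3] [1]
        = [1,2,3,1,3,2,3,1,2,3,2,1,3,1,2,1,3,2,3,1,2,3,2,1,2,3,1] := by decide
    rw [h3]
  have hpref : ∀ m, m ≤ 27 → (List.range m).map arshon
      = (List.range m).map
        (fun i => ([1,2,3,1,3,2,3,1,2,3,2,1,3,1,2,1,3,2,3,1,2,3,2,1,2,3,1] : List ℕ).getD i 0) :=
    by
    intro m hm
    apply List.map_congr_left
    intro i hi
    apply hval
    rw [List.mem_range] at hi
    omega
  -- f [1] = [1, 2]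
  have hf1 : f [1] = [1, 2] := by
    have h := hfix 1
    have e1 : (List.range 1).map arshon = [1] := (hpref 1 (by norm_num)).trans (by decide)
    rw [e1, hlen, hpref 2 (by norm_num)] at h
    exact h
  -- key: images of prefixes ending just before a letter 1 force "12" in w
  have key : ∀ n : ℕ, arshon n = 1 →
      arshon (f ((List.range n).map arshon)).length = 1 ∧
      arshon ((f ((List.range n).map arshon)).length + 1) = 2 := by
    intro n h1
    have h := hfix (n + 1)
    rw [List.range_succ, List.map_append, List.map_singleton, fapp, h1, hf1] at h
    have e : ∀ i, i < 2 →
        arshon ((f ((List.range n).map arshon)).length + i) = [1, 2].getD i 0 := by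
      intro i hi
      have h0 := congrArg (fun l : List ℕ => l.getD ((f ((List.range n).map arshon)).length + i) 0) h
      rw [List.getD_append_right _ _ _ _ (by omega),
        getD_map_range arshon (by simp; omega),
        show (f ((List.range n).map arshon)).length + i
            - (f ((List.range n).map arshon)).length = i from by omega] at h0
      exact h0.symm
    exact ⟨by simpa using e 0 (by norm_num), by simpa using e 1 (by norm_num)⟩
  -- concrete prefixes
  have p3 : (List.range 3).map arshon = [1, 2, 3] :=
    (hpref 3 (by norm_num)).trans (by decide)
  have p7 : (List.range 7).map arshon = [1,2,3,1,3,2,3] :=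
    (hpref 7 (by norm_num)).trans (by decide)
  have p11 : (List.range 11).map arshon = [1,2,3,1,3,2,3,1,2,3,2] :=
    (hpref 11 (by norm_num)).trans (by decide)
  have p13 : (List.range 13).map arshon = [1,2,3,1,3,2,3,1,2,3,2,1,3] :=
    (hpref 13 (by norm_num)).trans (by decide)
  have p15 : (List.range 15).map arshon = [1,2,3,1,3,2,3,1,2,3,2,1,3,1,2] :=
    (hpref 15 (by norm_num)).trans (by decide)
  have p19 : (List.range 19).map arshon = [1,2,3,1,3,2,3,1,2,3,2,1,3,1,2,1,3,2,3] :=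
    (hpref 19 (by norm_num)).trans (by decide)
  -- lengths of the images
  have l3 : (f ((List.range 3).map arshon)).length = 2 + (f [2]).length + (f [3]).length := by
    rw [p3, flen]
    simp only [List.map_cons, List.map_nil, List.sum_cons, List.sum_nil, hlen]
    omega
  have l7 : (f ((List.range 7).map arshon)).length = 4 + 2 * (f [2]).length + 3 * (f [3]).length := by
    rw [p7, flen]
    simp only [List.map_cons, List.map_nil, List.sum_cons, List.sum_nil, hlen]
    omega
  have l11 : (f ((List.range 11).map arshon)).length = 6 + 4 * (f [2]).length + 4 * (f [3]).length := by
    rw [p11, flen]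
    simp only [List.map_cons, List.map_nil, List.sum_cons, List.sum_nil, hlen]
    omega
  have l13 : (f ((List.range 13).map arshon)).length = 8 + 4 * (f [2]).length + 5 * (f [3]).length := by
    rw [p13, flen]
    simp only [List.map_cons, List.map_nil, List.sum_cons, List.sum_nil, hlen]
    omega
  have l15 : (f ((List.range 15).map arshon)).length = 10 + 5 * (f [2]).length + 5 * (f [3]).length := by
    rw [p15, flen]
    simp only [List.map_cons, List.map_nil, List.sum_cons, List.sum_nil, hlen]
    omega
  have l19 : (f ((List.range 19).map arshon)).length = 12 + 6 * (f [2]).length + 7 * (f [3]).length := by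
    rw [p19, flen]
    simp only [List.map_cons, List.map_nil, List.sum_cons, List.sum_nil, hlen]
    ring
  -- the six forced occurrences of "12"
  have q3 := no12 _ (key 3 ((hval 3 (by norm_num)).trans (by decide)))
  have q7 := no12 _ (key 7 ((hval 7 (by norm_num)).trans (by decide)))
  have q11 := no12 _ (key 11 ((hval 11 (by norm_num)).trans (by decide)))
  have q13 := no12 _ (key 13 ((hval 13 (by norm_num)).trans (by decide)))
  have q15 := no12 _ (key 15 ((hval 15 (by norm_num)).trans (by decide)))
  have q19 := no12 _ (key 19 ((hval 19 (by norm_num)).trans (by decide)))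
  rw [l3] at q3
  rw [l7] at q7
  rw [l11] at q11
  rw [l13] at q13
  rw [l15] at q15
  rw [l19] at q19
  obtain ⟨q3a, q3b⟩ := q3
  obtain ⟨q7a, q7b⟩ := q7
  obtain ⟨q11a, q11b⟩ := q11
  obtain ⟨q13a, q13b⟩ := q13
  obtain ⟨q15a, q15b⟩ := q15
  obtain ⟨q19a, q19b⟩ := q19
  obtain ⟨x, hx, hxe⟩ : ∃ x, x < 6 ∧ (f [2]).length % 6 = x :=
    ⟨_, Nat.mod_lt _ (by norm_num), rfl⟩
  obtain ⟨y, hy, hye⟩ : ∃ y, y < 6 ∧ (f [3]).length % 6 = y :=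
    ⟨_, Nat.mod_lt _ (by norm_num), rfl⟩
  interval_cases x <;> interval_cases y <;> omega
end
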